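/- Let S ∈ (0,1) and A₄ = 3(1−S). Let B₁, B₂ ∈ ℝ with B₁ ≠ 0, B₂² − 2B₁B₂ − 1 = 0 and |B₂| > 1, and let γ ∈ ℝ satisfy γ² = 3/B₁². Set α₀ = A₄B₁²(2B₂ − B₁)/(12(6B₁²B₂ + 3B₁ + 2B₂)). Then 6B₁²B₂ + 3B₁ + 2B₂ ≠ 0, α₀ = A₄B₁²/(12B₂²), and the function Z(r) = B₁/(tanh(γr) + B₂) satisfies, for all r ∈ ℝ: α₀·(Z′(r))² = A₄Z(r)⁴ + A₃Z(r)³ + A₂Z(r)² + A₁Z(r) + A₀, where A₃ = −2A₄, A₂ = A₄(B₁ + B₂)/B₂, A₁ = −A₄B₁/B₂, and A₀ = 3α₀; in particular A₁ + A₂ + A₃ + A₄ = 0. -/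

import Mathlib

/-- The kink-type profile Z(r) = B₁/(tanh(γr) + B₂). -/
noncomputable def Ztanh (B₁ B₂ γ : ℝ) : ℝ → ℝ := fun r => B₁ / (Real.tanh (γ * r) + B₂)

lemma tanh_hasDerivAt' (x : ℝ) : HasDerivAt Real.tanh (1 - Real.tanh x ^ 2) x := by
  have hc := Real.cosh_pos x
  have h : HasDerivAt (fun y => Real.sinh y / Real.cosh y)
      ((Real.cosh x * Real.cosh x - Real.sinh x * Real.sinh x) / Real.cosh x ^ 2) x :=
    (Real.hasDerivAt_sinh x).div (Real.hasDerivAt_cosh x) hc.ne'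
  have heq : Real.tanh = fun y => Real.sinh y / Real.cosh y :=
    funext fun y => Real.tanh_eq_sinh_div_cosh y
  rw [heq]
  convert h using 1
  have hcs := Real.cosh_sq_sub_sinh_sq x
  simp only
  field_simp

lemma abs_tanh_lt_one' (x : ℝ) : |Real.tanh x| < 1 := by
  have hc := Real.cosh_pos x
  have hcs := Real.cosh_sq_sub_sinh_sq x
  rw [Real.tanh_eq_sinh_div_cosh, abs_div, abs_of_pos hc, div_lt_one hc]
  nlinarith [abs_nonneg (Real.sinh x), sq_abs (Real.sinh x)]

lemma keyid' (t B₁ B₂ γ A₄ : ℝ) (htB : t + B₂ ≠ 0) (hB₂0 : B₂ ≠ 0) (hB₁ : B₁ ≠ 0)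
    (hE : B₂ ^ 2 - 2 * B₁ * B₂ - 1 = 0) (hγ : γ ^ 2 * B₁ ^ 2 = 3) :
    A₄ * B₁ ^ 2 / (12 * B₂ ^ 2) * ((0 * (t + B₂) - B₁ * ((1 - t ^ 2) * γ)) / (t + B₂) ^ 2) ^ 2
      = A₄ * (B₁ / (t + B₂)) ^ 4 + (-2 * A₄) * (B₁ / (t + B₂)) ^ 3
        + (A₄ * (B₁ + B₂) / B₂) * (B₁ / (t + B₂)) ^ 2
        + (-A₄ * B₁ / B₂) * (B₁ / (t + B₂)) + 3 * (A₄ * B₁ ^ 2 / (12 * B₂ ^ 2)) := by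
  have h1 : (0 * (t + B₂) - B₁ * ((1 - t ^ 2) * γ)) ^ 2 = 3 * (1 - t ^ 2) ^ 2 := by
    have : (0 * (t + B₂) - B₁ * ((1 - t ^ 2) * γ)) ^ 2 = γ ^ 2 * B₁ ^ 2 * (1 - t ^ 2) ^ 2 := by
      ring
    rw [this, hγ]
  rw [div_pow, h1]
  have hP : (1 - t ^ 2) ^ 2 = 4 * B₂ ^ 2 * B₁ ^ 2 - 8 * B₂ ^ 2 * B₁ * (t + B₂)
      + 4 * B₂ * (B₁ + B₂) * (t + B₂) ^ 2 - 4 * B₂ * (t + B₂) ^ 3 + (t + B₂) ^ 4 := by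
    linear_combination (-(B₂ ^ 2 - 2 * B₁ * B₂ - 2 * t ^ 2 + 1)) * hE
  rw [hP]
  field_simp
  ring

theorem stmt14 (S A₄ B₁ B₂ γ α₀ A₃ A₂ A₁ A₀ : ℝ)
    (hS : 0 < S) (hS1 : S < 1) (hA₄ : A₄ = 3 * (1 - S))
    (hB₁ : B₁ ≠ 0) (hB₂ : B₂ ^ 2 - 2 * B₁ * B₂ - 1 = 0) (habs : 1 < |B₂|)
    (hγ : γ ^ 2 = 3 / B₁ ^ 2)
    (hα₀ : α₀ = A₄ * B₁ ^ 2 * (2 * B₂ - B₁) / (12 * (6 * B₁ ^ 2 * B₂ + 3 * B₁ + 2 * B₂)))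
    (hA₃ : A₃ = -2 * A₄) (hA₂ : A₂ = A₄ * (B₁ + B₂) / B₂)
    (hA₁ : A₁ = -A₄ * B₁ / B₂) (hA₀ : A₀ = 3 * α₀) :
    (6 * B₁ ^ 2 * B₂ + 3 * B₁ + 2 * B₂ ≠ 0) ∧
    (α₀ = A₄ * B₁ ^ 2 / (12 * B₂ ^ 2)) ∧
    (∀ r : ℝ, α₀ * (deriv (Ztanh B₁ B₂ γ) r) ^ 2
      = A₄ * (Ztanh B₁ B₂ γ r) ^ 4 + A₃ * (Ztanh B₁ B₂ γ r) ^ 3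
        + A₂ * (Ztanh B₁ B₂ γ r) ^ 2 + A₁ * Ztanh B₁ B₂ γ r + A₀) ∧
    (A₁ + A₂ + A₃ + A₄ = 0) := by
  have hB₂0 : B₂ ≠ 0 := by
    intro h
    rw [h, abs_zero] at habs
    linarith
  have hγ' : γ ^ 2 * B₁ ^ 2 = 3 := by
    field_simp at hγ
    linarith [hγ]
  have hkey : 2 * B₂ * (6 * B₁ ^ 2 * B₂ + 3 * B₁ + 2 * B₂) = B₂ ^ 2 * (3 * B₂ ^ 2 + 1) := by
    linear_combination (-3 * (B₂ ^ 2 + 2 * B₁ * B₂)) * hB₂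
  have hD : 6 * B₁ ^ 2 * B₂ + 3 * B₁ + 2 * B₂ ≠ 0 := by
    intro h
    have h1 : B₂ ^ 2 * (3 * B₂ ^ 2 + 1) = 0 := by rw [← hkey, h]; ring
    have h2 : 0 < B₂ ^ 2 * (3 * B₂ ^ 2 + 1) := by positivity
    linarith
  have hα₀' : α₀ = A₄ * B₁ ^ 2 / (12 * B₂ ^ 2) := by
    rw [hα₀]
    rw [div_eq_div_iff (mul_ne_zero (by norm_num) hD) (by positivity)]
    linear_combination (12 * A₄ * B₁ ^ 2 * (2 * B₂ + 3 * B₁)) * hB₂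
  refine ⟨hD, hα₀', ?_, ?_⟩
  · intro r
    set t := Real.tanh (γ * r) with ht
    have htB : t + B₂ ≠ 0 := by
      intro h
      have h1 : |t| < 1 := abs_tanh_lt_one' (γ * r)
      have h2 : t = -B₂ := by linarith
      rw [h2, abs_neg] at h1
      linarith
    have h1 : HasDerivAt (fun x : ℝ => γ * x) γ r := by
      simpa using (hasDerivAt_id r).const_mul γ
    have h2 : HasDerivAt (fun x => Real.tanh (γ * x)) ((1 - t ^ 2) * γ) r :=
      (tanh_hasDerivAt' (γ * r)).comp r h1
    have h3 : HasDerivAt (fun x => Real.tanh (γ * x) + B₂) ((1 - t ^ 2) * γ) r :=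
      h2.add_const B₂
    have hd : HasDerivAt (Ztanh B₁ B₂ γ)
        ((0 * (t + B₂) - B₁ * ((1 - t ^ 2) * γ)) / (t + B₂) ^ 2) r :=
      (hasDerivAt_const r B₁).div h3 htB
    rw [hd.deriv]
    have hZ : Ztanh B₁ B₂ γ r = B₁ / (t + B₂) := rfl
    rw [hZ, hα₀', hA₃, hA₂, hA₁, hA₀, hα₀']
    exact keyid' t B₁ B₂ γ A₄ htB hB₂0 hB₁ hB₂ hγ'
  · rw [hA₁, hA₂, hA₃]
    field_simp
    ring
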